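/- Let μ > 0, A ∈ ℝ^{m×n}, C ∈ ℝ^{n×n} symmetric positive semidefinite, B = ACAᵀ, M(α) = μI_m + αB, r̄ ∈ ℝ^m, and δ > 0. Define ζ_δ(α) = 1 + (r̄ᵀM(α)⁻¹r̄)·(r̄ᵀM(α)⁻¹ B M(α)⁻¹ r̄)/(4δ) for α ∈ [1,∞). Then ζ_δ is differentiable and for every α ∈ [1,∞), |ζ_δ'(α)| ≤ (3/(4δ))·λ_max(B)²·‖r̄‖₂⁴/(μ + λ_min(B))⁴, where λ_max(B) and λ_min(B) denote the largest and smallest eigenvalues of B. -/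

import Mathlib

open Matrix

noncomputable def eNorm {k : ℕ} (x : Fin k → ℝ) : ℝ := Real.sqrt (∑ i, x i ^ 2)

private lemma zdb_aux_affine (μ d α : ℝ) : HasDerivAt (fun β : ℝ => μ + β * d) d α := by
  simpa using (hasDerivAt_mul_const d).const_add μ

private lemma zdb_aux1 (μ d s α : ℝ) (h : μ + α * d ≠ 0) :
    HasDerivAt (fun β : ℝ => (μ + β * d)⁻¹ * s) (-(d * ((μ + α * d) ^ 2)⁻¹ * s)) α := by
  have h1 := ((zdb_aux_affine μ d α).inv h).mul_const s
  refine h1.congr_deriv ?_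
  ring

private lemma zdb_aux2 (μ d s α : ℝ) (h : μ + α * d ≠ 0) :
    HasDerivAt (fun β : ℝ => (μ + β * d)⁻¹ * (d * (μ + β * d)⁻¹) * s)
      (-(2 * (d ^ 2 * ((μ + α * d) ^ 3)⁻¹ * s))) α := by
  have hinv := (zdb_aux_affine μ d α).inv h
  have h1 := (hinv.mul (hinv.const_mul d)).mul_const s
  refine h1.congr_deriv ?_
  simp only [Pi.inv_apply]
  field_simp
  ring

private lemma zdb_conj_mul {m : ℕ} (U : Matrix (Fin m) (Fin m) ℝ) (hU : star U * U = 1)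
    (c₁ c₂ : Fin m → ℝ) :
    (U * diagonal c₁ * star U) * (U * diagonal c₂ * star U)
      = U * diagonal (fun i => c₁ i * c₂ i) * star U := by
  have hstep : ∀ Z : Matrix (Fin m) (Fin m) ℝ, star U * (U * Z) = Z := fun Z => by
    rw [← Matrix.mul_assoc, hU, Matrix.one_mul]
  simp only [Matrix.mul_assoc]
  rw [hstep, ← Matrix.mul_assoc (diagonal c₁), diagonal_mul_diagonal]

private lemma zdb_quad_form {m : ℕ} (U : Matrix (Fin m) (Fin m) ℝ) (hU : star U = Uᵀ)
    (r : Fin m → ℝ) (c : Fin m → ℝ) :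
    r ⬝ᵥ ((U * diagonal c * star U) *ᵥ r) = ∑ i, c i * (star U *ᵥ r) i ^ 2 := by
  have h1 : (U * diagonal c * star U) *ᵥ r = U *ᵥ (diagonal c *ᵥ (star U *ᵥ r)) := by
    rw [mulVec_mulVec, mulVec_mulVec]
  have h2 : r ᵥ* U = star U *ᵥ r := by rw [hU, mulVec_transpose]
  rw [h1, dotProduct_mulVec, h2]
  calc (star U *ᵥ r) ⬝ᵥ (diagonal c *ᵥ (star U *ᵥ r))
      = ∑ i, (star U *ᵥ r) i * (c i * (star U *ᵥ r) i) := by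
        simp [dotProduct, mulVec_diagonal]
    _ = ∑ i, c i * (star U *ᵥ r) i ^ 2 := Finset.sum_congr rfl fun i _ => by ring

theorem zeta_derivative_bound {m n : ℕ} (μ : ℝ) (hμ : 0 < μ)
    (A : Matrix (Fin m) (Fin n) ℝ) (C : Matrix (Fin n) (Fin n) ℝ) (hC : C.PosSemidef)
    (rbar : Fin m → ℝ) (δ : ℝ) (hδ : 0 < δ) :
    let B : Matrix (Fin m) (Fin m) ℝ := A * C * Aᵀ
    let M : ℝ → Matrix (Fin m) (Fin m) ℝ := fun α => μ • 1 + α • B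
    let ζ : ℝ → ℝ := fun α => 1 + (rbar ⬝ᵥ ((M α)⁻¹ *ᵥ rbar)) *
      (rbar ⬝ᵥ ((M α)⁻¹ *ᵥ (B *ᵥ ((M α)⁻¹ *ᵥ rbar)))) / (4 * δ)
    let lmax : ℝ := sSup (spectrum ℝ B)
    let lmin : ℝ := sInf (spectrum ℝ B)
    ∀ α : ℝ, 1 ≤ α →
      DifferentiableAt ℝ ζ α ∧
      |deriv ζ α| ≤ (3 / (4 * δ)) * lmax ^ 2 * eNorm rbar ^ 4 / (μ + lmin) ^ 4 := by
  intro B M ζ lmax lmin α hα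
  have hαpos : (0:ℝ) < α := lt_of_lt_of_le one_pos hα
  have hB : B.PosSemidef := by
    have h := hC.mul_mul_conjTranspose_same A
    rwa [conjTranspose_eq_transpose_of_trivial] at h
  have hH : B.IsHermitian := hB.1
  set U : Matrix (Fin m) (Fin m) ℝ := (hH.eigenvectorUnitary : Matrix (Fin m) (Fin m) ℝ)
    with hUdef
  set d : Fin m → ℝ := hH.eigenvalues with hddef
  have hd0 : ∀ i, 0 ≤ d i := fun i => hB.eigenvalues_nonneg i
  have hU1 : U * star U = 1 := mem_unitaryGroup_iff.mp hH.eigenvectorUnitary.2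
  have hU2 : star U * U = 1 := mem_unitaryGroup_iff'.mp hH.eigenvectorUnitary.2
  have hsUT : star U = Uᵀ := by
    rw [Matrix.star_eq_conjTranspose, conjTranspose_eq_transpose_of_trivial]
  have hspec : B = U * diagonal d * star U := by
    have h := hH.spectral_theorem
    simpa using h
  set s : Fin m → ℝ := star U *ᵥ rbar with hsdef
  -- conjugation form of M
  have hMconj : ∀ β : ℝ, M β = U * diagonal (fun i => μ + β * d i) * star U := by
    intro β
    have hdiag : diagonal (fun i => μ + β * d i)
        = μ • (1 : Matrix (Fin m) (Fin m) ℝ) + β • diagonal d := by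
      rw [smul_one_eq_diagonal, ← diagonal_smul, ← diagonal_add]
      rfl
    rw [hdiag, Matrix.mul_add, Matrix.add_mul, Matrix.mul_smul, Matrix.smul_mul,
      Matrix.mul_smul, Matrix.smul_mul, Matrix.mul_one, hU1, ← hspec]
    -- inverse of M in conjugated form
  have hMinv : ∀ β : ℝ, 0 < β →
      (M β)⁻¹ = U * diagonal (fun i => (μ + β * d i)⁻¹) * star U := by
    intro β hβ
    have hpos : ∀ i, 0 < μ + β * d i :=
      fun i => add_pos_of_pos_of_nonneg hμ (mul_nonneg hβ.le (hd0 i))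
    apply Matrix.inv_eq_right_inv
    rw [hMconj β, zdb_conj_mul U hU2]
    rw [show (fun i => (μ + β * d i) * (μ + β * d i)⁻¹) = (fun _ : Fin m => (1:ℝ)) from
      funext fun i => mul_inv_cancel₀ (hpos i).ne']
    rw [diagonal_one, Matrix.mul_one, hU1]
  -- scalar formula for ζ on (0, ∞)
  have hζφ : ∀ β : ℝ, 0 < β → ζ β = 1 + (∑ i, (μ + β * d i)⁻¹ * s i ^ 2) *
      (∑ i, (μ + β * d i)⁻¹ * (d i * (μ + β * d i)⁻¹) * s i ^ 2) / (4 * δ) := by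
    intro β hβ
    show 1 + (rbar ⬝ᵥ ((M β)⁻¹ *ᵥ rbar)) *
      (rbar ⬝ᵥ ((M β)⁻¹ *ᵥ (B *ᵥ ((M β)⁻¹ *ᵥ rbar)))) / (4 * δ) = _
    have h1 : rbar ⬝ᵥ ((M β)⁻¹ *ᵥ rbar) = ∑ i, (μ + β * d i)⁻¹ * s i ^ 2 := by
      rw [hMinv β hβ, zdb_quad_form U hsUT]
    have h2 : rbar ⬝ᵥ ((M β)⁻¹ *ᵥ (B *ᵥ ((M β)⁻¹ *ᵥ rbar)))
        = ∑ i, (μ + β * d i)⁻¹ * (d i * (μ + β * d i)⁻¹) * s i ^ 2 := by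
      rw [mulVec_mulVec, mulVec_mulVec, hMinv β hβ, hspec,
        zdb_conj_mul U hU2, zdb_conj_mul U hU2, zdb_quad_form U hsUT]
      exact Finset.sum_congr rfl fun i _ => by rw [← hsdef]; ring
    rw [h1, h2]
    -- eigenvalue facts
  have hspecR : spectrum ℝ B = Set.range d := hH.spectrum_real_eq_range_eigenvalues
  have hlmin0 : 0 ≤ lmin := by
    rcases isEmpty_or_nonempty (Fin m) with hm | hm
    · show (0:ℝ) ≤ sInf (spectrum ℝ B)
      rw [hspecR, Set.range_eq_empty, Real.sInf_empty]
    · obtain ⟨i, hi⟩ := (Set.range_nonempty d).csInf_mem (Set.finite_range d)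
      show (0:ℝ) ≤ sInf (spectrum ℝ B)
      rw [hspecR, ← hi]
      exact hd0 i
  have hlminle : ∀ i, lmin ≤ d i := fun i => by
    show sInf (spectrum ℝ B) ≤ d i
    rw [hspecR]
    exact csInf_le (Set.finite_range d).bddBelow ⟨i, rfl⟩
  have hdle : ∀ i, d i ≤ lmax := fun i => by
    show d i ≤ sSup (spectrum ℝ B)
    rw [hspecR]
    exact le_csSup (Set.finite_range d).bddAbove ⟨i, rfl⟩
  have hL : 0 < μ + lmin := add_pos_of_pos_of_nonneg hμ hlmin0
  have hne : ∀ i, 0 < μ + α * d i :=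
    fun i => add_pos_of_pos_of_nonneg hμ (mul_nonneg hαpos.le (hd0 i))
  have heL : ∀ i, μ + lmin ≤ μ + α * d i := fun i =>
    add_le_add_right ((hlminle i).trans (le_mul_of_one_le_left (hd0 i) hα)) μ
  -- derivative of the scalar formula
  have hg2 : (∑ i, (μ + α * d i)⁻¹ * (d i * (μ + α * d i)⁻¹) * s i ^ 2)
      = ∑ i, d i * ((μ + α * d i) ^ 2)⁻¹ * s i ^ 2 :=
    Finset.sum_congr rfl fun i _ => by
      rw [show ((μ + α * d i) ^ 2)⁻¹ = (μ + α * d i)⁻¹ * (μ + α * d i)⁻¹ by rw [sq, mul_inv]]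
      ring
  have hF : HasDerivAt (fun β => ∑ i, (μ + β * d i)⁻¹ * s i ^ 2)
      (∑ i, -(d i * ((μ + α * d i) ^ 2)⁻¹ * s i ^ 2)) α :=
    HasDerivAt.fun_sum fun i _ => zdb_aux1 μ (d i) (s i ^ 2) α (hne i).ne'
  have hG : HasDerivAt (fun β => ∑ i, (μ + β * d i)⁻¹ * (d i * (μ + β * d i)⁻¹) * s i ^ 2)
      (∑ i, -(2 * (d i ^ 2 * ((μ + α * d i) ^ 3)⁻¹ * s i ^ 2))) α :=
    HasDerivAt.fun_sum fun i _ => zdb_aux2 μ (d i) (s i ^ 2) α (hne i).ne'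
  have hφ : HasDerivAt (fun β => 1 + (∑ i, (μ + β * d i)⁻¹ * s i ^ 2) *
        (∑ i, (μ + β * d i)⁻¹ * (d i * (μ + β * d i)⁻¹) * s i ^ 2) / (4 * δ))
      (-(((∑ i, d i * ((μ + α * d i) ^ 2)⁻¹ * s i ^ 2) *
            (∑ i, d i * ((μ + α * d i) ^ 2)⁻¹ * s i ^ 2) +
          2 * ((∑ i, (μ + α * d i)⁻¹ * s i ^ 2) *
            (∑ i, d i ^ 2 * ((μ + α * d i) ^ 3)⁻¹ * s i ^ 2))) / (4 * δ))) α := by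
    have h0 := ((hF.mul hG).div_const (4 * δ)).const_add 1
    refine h0.congr_deriv ?_
    rw [Finset.sum_neg_distrib, Finset.sum_neg_distrib, ← Finset.mul_sum, hg2]
    ring
  have heq : ζ =ᶠ[nhds α] (fun β => 1 + (∑ i, (μ + β * d i)⁻¹ * s i ^ 2) *
      (∑ i, (μ + β * d i)⁻¹ * (d i * (μ + β * d i)⁻¹) * s i ^ 2) / (4 * δ)) := by
    filter_upwards [isOpen_Ioi.mem_nhds (show α ∈ Set.Ioi (0:ℝ) from hαpos)] with β hβ
    exact hζφ β hβ
  have hζD := hφ.congr_of_eventuallyEq heq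
  refine ⟨hζD.differentiableAt, ?_⟩
  rw [hζD.deriv]
  set F : ℝ := ∑ i, (μ + α * d i)⁻¹ * s i ^ 2 with hFdef
  set g : ℝ := ∑ i, d i * ((μ + α * d i) ^ 2)⁻¹ * s i ^ 2 with hgdef
  set hh : ℝ := ∑ i, d i ^ 2 * ((μ + α * d i) ^ 3)⁻¹ * s i ^ 2 with hhdef
  set S : ℝ := ∑ i, s i ^ 2 with hSdef
  -- nonnegativity
  have hF0 : 0 ≤ F := Finset.sum_nonneg fun i _ =>
    mul_nonneg (inv_nonneg.mpr (hne i).le) (sq_nonneg _)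
  have hg0 : 0 ≤ g := Finset.sum_nonneg fun i _ =>
    mul_nonneg (mul_nonneg (hd0 i) (inv_nonneg.mpr (pow_nonneg (hne i).le 2))) (sq_nonneg _)
  have hh0 : 0 ≤ hh := Finset.sum_nonneg fun i _ =>
    mul_nonneg (mul_nonneg (sq_nonneg _) (inv_nonneg.mpr (pow_nonneg (hne i).le 3))) (sq_nonneg _)
  -- S equals the squared Euclidean norm
  have hS : S = eNorm rbar ^ 2 := by
    have hdot : s ⬝ᵥ s = rbar ⬝ᵥ rbar := by
      conv_lhs => rw [hsdef, hsUT]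
      calc (Uᵀ *ᵥ rbar) ⬝ᵥ (Uᵀ *ᵥ rbar)
          = ((Uᵀ *ᵥ rbar) ᵥ* Uᵀ) ⬝ᵥ rbar := dotProduct_mulVec _ _ _
        _ = (U *ᵥ (Uᵀ *ᵥ rbar)) ⬝ᵥ rbar := by rw [vecMul_transpose]
        _ = rbar ⬝ᵥ rbar := by rw [mulVec_mulVec, ← hsUT, hU1, one_mulVec]
    have h1 : S = s ⬝ᵥ s := by
      rw [hSdef]
      simp [dotProduct, sq]
    have h2 : eNorm rbar ^ 2 = ∑ i, rbar i ^ 2 :=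
      Real.sq_sqrt (Finset.sum_nonneg fun i _ => sq_nonneg _)
    rw [h1, hdot, h2]
    simp [dotProduct, sq]
  -- upper bounds on F, g, hh
  have hFle : F ≤ (μ + lmin)⁻¹ * S := by
    rw [hFdef, hSdef, Finset.mul_sum]
    exact Finset.sum_le_sum fun i _ =>
      mul_le_mul_of_nonneg_right (inv_anti₀ hL (heL i)) (sq_nonneg _)
  have hgle : g ≤ lmax * ((μ + lmin) ^ 2)⁻¹ * S := by
    rw [hgdef, hSdef, Finset.mul_sum]
    refine Finset.sum_le_sum fun i _ => mul_le_mul_of_nonneg_right ?_ (sq_nonneg _)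
    exact mul_le_mul (hdle i)
      (inv_anti₀ (pow_pos hL 2) (pow_le_pow_left₀ hL.le (heL i) 2))
      (inv_nonneg.mpr (pow_nonneg (hne i).le 2)) ((hd0 i).trans (hdle i))
  have hhle : hh ≤ lmax ^ 2 * ((μ + lmin) ^ 3)⁻¹ * S := by
    rw [hhdef, hSdef, Finset.mul_sum]
    refine Finset.sum_le_sum fun i _ => mul_le_mul_of_nonneg_right ?_ (sq_nonneg _)
    exact mul_le_mul (pow_le_pow_left₀ (hd0 i) (hdle i) 2)
      (inv_anti₀ (pow_pos hL 3) (pow_le_pow_left₀ hL.le (heL i) 3))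
      (inv_nonneg.mpr (pow_nonneg (hne i).le 3)) (pow_nonneg ((hd0 i).trans (hdle i)) 2)
  -- put the bound together
  have h4δ : (0:ℝ) < 4 * δ := by linarith
  have hnum0 : 0 ≤ (g * g + 2 * (F * hh)) / (4 * δ) :=
    div_nonneg (add_nonneg (mul_nonneg hg0 hg0)
      (mul_nonneg (by norm_num) (mul_nonneg hF0 hh0))) h4δ.le
  rw [abs_neg, abs_of_nonneg hnum0]
  have num_le : g * g + 2 * (F * hh) ≤ 3 * lmax ^ 2 * S ^ 2 * ((μ + lmin) ^ 4)⁻¹ := by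
    have h1 : g * g ≤ (lmax * ((μ + lmin) ^ 2)⁻¹ * S) * (lmax * ((μ + lmin) ^ 2)⁻¹ * S) :=
      mul_le_mul hgle hgle hg0 (hg0.trans hgle)
    have h2 : F * hh ≤ ((μ + lmin)⁻¹ * S) * (lmax ^ 2 * ((μ + lmin) ^ 3)⁻¹ * S) :=
      mul_le_mul hFle hhle hh0 (hF0.trans hFle)
    have h3 : (lmax * ((μ + lmin) ^ 2)⁻¹ * S) * (lmax * ((μ + lmin) ^ 2)⁻¹ * S) +
        2 * (((μ + lmin)⁻¹ * S) * (lmax ^ 2 * ((μ + lmin) ^ 3)⁻¹ * S))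
        = 3 * lmax ^ 2 * S ^ 2 * ((μ + lmin) ^ 4)⁻¹ := by
      field_simp
      ring
    linarith
  calc (g * g + 2 * (F * hh)) / (4 * δ)
      ≤ (3 * lmax ^ 2 * S ^ 2 * ((μ + lmin) ^ 4)⁻¹) / (4 * δ) :=
        (div_le_div_iff_of_pos_right h4δ).mpr num_le
    _ = 3 / (4 * δ) * lmax ^ 2 * eNorm rbar ^ 4 / (μ + lmin) ^ 4 := by
        rw [hS]
        field_simp
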